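/- Let P : Grp → Prop be a predicate on groups, let A be the full subcategory of Grp on the groups satisfying P, with inclusion functor I : A ⥤ Grp. Let F : A ⥤ Grp be a functor and ρ : F ⟶ I a natural transformation all of whose components are monomorphisms. Then there exist a functor D : Grp ⥤ Grp, a natural transformation σ : D ⟶ 𝟭 Grp all of whose components are monomorphisms, and, for every object X of A, an isomorphism τ_X : F.obj X ≅ D.obj (I.obj X) such that ρ.app X = τ_X.hom ≫ σ.app (I.obj X). -/

import Mathlib

open CategoryTheory

section
variable {P : GrpCat → Prop} (F : ObjectProperty.FullSubcategory P ⥤ GrpCat) (ρ : F ⟶ ObjectProperty.ι P)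

def mySub (G : GrpCat) : Subgroup G :=
  ⨆ (X : ObjectProperty.FullSubcategory P) (g : X.obj ⟶ G), Subgroup.map g.hom (MonoidHom.range (ρ.app X).hom)

lemma mySub_le {G H : GrpCat} (f : G ⟶ H) : (mySub F ρ G).map f.hom ≤ mySub F ρ H := by
  rw [mySub, Subgroup.map_iSup]
  refine iSup_le fun X => ?_
  rw [Subgroup.map_iSup]
  refine iSup_le fun g => ?_
  rw [Subgroup.map_map]
  exact le_iSup_of_le X (le_iSup_of_le (g ≫ f) le_rfl)

lemma mem_mySub {G H : GrpCat} (f : G ⟶ H) (x : mySub F ρ G) : f x ∈ mySub F ρ H :=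
  mySub_le F ρ f ⟨x, x.2, rfl⟩

def myD : GrpCat ⥤ GrpCat where
  obj G := GrpCat.of (mySub F ρ G)
  map {G H} f := GrpCat.ofHom <|
    (f.hom.comp (mySub F ρ G).subtype).codRestrict (mySub F ρ H)
      (fun x => mem_mySub F ρ f x)
  map_id G := by ext x; rfl
  map_comp f g := by ext x; rfl

def mySigma : myD F ρ ⟶ 𝟭 GrpCat where
  app G := GrpCat.ofHom (mySub F ρ G).subtype
  naturality {G H} f := by ext x; rfl

lemma mySub_eq (X : ObjectProperty.FullSubcategory P) :
    mySub F ρ X.obj = MonoidHom.range (ρ.app X).hom := by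
  apply le_antisymm
  · refine iSup_le fun Y => iSup_le fun g => ?_
    rintro _ ⟨_, ⟨a, rfl⟩, rfl⟩
    have h := ρ.naturality (X := Y) (Y := X) (ObjectProperty.homMk g)
    have h2 := congrArg (fun (k : F.obj Y ⟶ (ObjectProperty.ι P).obj X) => k a) h
    refine ⟨F.map (ObjectProperty.homMk g) a, ?_⟩
    have h3 : (F.map (ObjectProperty.homMk g) ≫ ρ.app X) a = (ρ.app Y ≫ (ObjectProperty.ι P).map (ObjectProperty.homMk g)) a :=
      congrArg (fun k => k a) h
    rw [comp_apply, comp_apply] at h3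
    exact h3
  · rintro y ⟨a, rfl⟩
    exact Subgroup.mem_iSup_of_mem X
      (Subgroup.mem_iSup_of_mem (𝟙 X.obj) ⟨ρ.app X a, ⟨a, rfl⟩, rfl⟩)

end

theorem extension_theorem (P : GrpCat → Prop)
    (F : ObjectProperty.FullSubcategory P ⥤ GrpCat) (ρ : F ⟶ ObjectProperty.ι P)
    (hρ : ∀ X : ObjectProperty.FullSubcategory P, Mono (ρ.app X)) :
    ∃ (D : GrpCat ⥤ GrpCat) (σ : D ⟶ 𝟭 GrpCat),
      (∀ G : GrpCat, Mono (σ.app G)) ∧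
      ∀ X : ObjectProperty.FullSubcategory P,
        ∃ τ : F.obj X ≅ D.obj ((ObjectProperty.ι P).obj X),
          ρ.app X = τ.hom ≫ σ.app ((ObjectProperty.ι P).obj X) := by
  refine ⟨myD F ρ, mySigma F ρ, ?_, ?_⟩
  · intro G
    rw [GrpCat.mono_iff_injective]
    exact Subtype.val_injective
  · intro X
    have hinj : Function.Injective (ρ.app X).hom := (GrpCat.mono_iff_injective _).1 (hρ X)
    let e : F.obj X ≃* mySub F ρ X.obj :=
      (MonoidHom.ofInjective hinj).trans (MulEquiv.subgroupCongr (mySub_eq F ρ X).symm)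
    refine ⟨⟨GrpCat.ofHom e.toMonoidHom, GrpCat.ofHom e.symm.toMonoidHom, ?_, ?_⟩, ?_⟩
    · ext a; exact e.symm_apply_apply a
    · ext a; exact e.apply_symm_apply a
    · ext a
      show ρ.app X a = ((e a : mySub F ρ X.obj) : X.obj)
      rfl
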